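/- Define Δ : ℝ → Sym(n,ℝ) as a formal power series in ε by the recursion Δ = F - Δ · H(Δ) · Δ truncated appropriately, where H(Δ)ₖ₁ₖ₂ = Σ_{m≥2} (1/m!) S_{k₁k₂k₃⋯kₘ} ∏_{l=3}^{m} (Δ S)_{kₗ} with S a polynomial in n variables and all multi-derivatives S_{k₁⋯kₘ} constant beyond the degree of S. Then this recursion has a unique solution as a formal power series in the entries of F, and its expansion begins Δᵢⱼ = Fᵢⱼ - (1/2) Fᵢₖ S_{kl} F_{lj} + higher order terms in F. -/

import Mathlib

open scoped BigOperators
open PowerSeries Matrix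

set_option maxHeartbeats 1000000
set_option synthInstance.maxHeartbeats 400000


lemma auxProdDvd {ι R : Type*} [CommRing R] (k : R) (s : Finset ι) (f g : ι → R)
    (h : ∀ i ∈ s, k ∣ f i - g i) : k ∣ (∏ i ∈ s, f i) - ∏ i ∈ s, g i := by
  classical
  induction s using Finset.induction_on with
  | empty => simp
  | insert _ _ hx ih =>
      rw [Finset.prod_insert hx, Finset.prod_insert hx]
      exact dvd_mul_sub_mul (h _ (Finset.mem_insert_self _ _))
        (ih fun i hi => h i (Finset.mem_insert_of_mem hi))

lemma auxContDiff {n : ℕ} (P : MvPolynomial (Fin n) ℝ) (N : WithTop ℕ∞) :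
    ContDiff ℝ N (fun y : Fin n → ℝ => MvPolynomial.eval y P) := by
  induction P using MvPolynomial.induction_on with
  | C a => simpa using contDiff_const (c := a)
  | add p q hp hq => simpa using hp.add hq
  | mul_X p i hp =>
      simpa using hp.mul ((ContinuousLinearMap.proj i : (Fin n → ℝ) →L[ℝ] ℝ).contDiff)

lemma auxSwap {n : ℕ} {f : (Fin n → ℝ) → ℝ} (hf : ∀ N : ℕ, ContDiff ℝ N f) (k : ℕ)
    (x : Fin n → ℝ) (v w : Fin (k + 2) → (Fin n → ℝ))
    (h0 : w 0 = v 1) (h1 : w 1 = v 0) (h2 : ∀ i : Fin k, w i.succ.succ = v i.succ.succ) :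
    iteratedFDeriv ℝ (k + 2) f x v = iteratedFDeriv ℝ (k + 2) f x w := by
  have hg : ContDiffAt ℝ 2 (iteratedFDeriv ℝ k f) x := by
    refine (hf (k + 2)).contDiffAt.iteratedFDeriv_right ?_
    exact_mod_cast le_of_eq (Nat.add_comm 2 k)
  have hsymm : IsSymmSndFDerivAt ℝ (iteratedFDeriv ℝ k f) x :=
    hg.isSymmSndFDerivAt (by simp)
  have hd : DifferentiableAt ℝ (fderiv ℝ (iteratedFDeriv ℝ k f)) x := by
    have : ContDiffAt ℝ 1 (fderiv ℝ (iteratedFDeriv ℝ k f)) x :=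
      hg.fderiv_right (by exact_mod_cast le_refl (2 : WithTop ℕ∞))
    exact this.differentiableAt one_ne_zero
  set e := (continuousMultilinearCurryLeftEquiv ℝ (fun _ : Fin (k + 1) => (Fin n → ℝ)) ℝ).symm.toContinuousLinearEquiv with he
  have hE : HasFDerivAt (⇑e ∘ fderiv ℝ (iteratedFDeriv ℝ k f))
      ((e.toContinuousLinearMap).comp (fderiv ℝ (fderiv ℝ (iteratedFDeriv ℝ k f)) x)) x :=
    by
      have h2 := ContinuousLinearEquiv.hasFDerivAt (𝕜 := ℝ) (iso := e) (x := fderiv ℝ (iteratedFDeriv ℝ k f) x)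
      exact h2.comp x hd.hasFDerivAt
  have hfun : iteratedFDeriv ℝ (k + 1) f = ⇑e ∘ fderiv ℝ (iteratedFDeriv ℝ k f) := rfl
  have hcomp : fderiv ℝ (iteratedFDeriv ℝ (k + 1) f) x =
      (e.toContinuousLinearMap).comp (fderiv ℝ (fderiv ℝ (iteratedFDeriv ℝ k f)) x) := by
    rw [hfun]; exact hE.fderiv
  have key : ∀ u : Fin (k + 2) → (Fin n → ℝ),
      iteratedFDeriv ℝ (k + 2) f x u =
        fderiv ℝ (fderiv ℝ (iteratedFDeriv ℝ k f)) x (u 0) (u 1)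
          (fun i : Fin k => u i.succ.succ) := by
    intro u
    rw [iteratedFDeriv_succ_apply_left, hcomp]
    rfl
  rw [key v, key w, h0, h1, hsymm.eq (v 0) (v 1)]
  congr 1
  funext i
  exact (h2 i).symm


lemma psEqZero {f : PowerSeries ℝ} (h : ∀ N : ℕ, (X : PowerSeries ℝ) ^ N ∣ f) : f = 0 := by
  apply PowerSeries.ext; intro N
  have := (PowerSeries.X_pow_dvd_iff.mp (h (N + 1))) N (by omega)
  simpa using this

lemma coeffTriple {f g h : PowerSeries ℝ} (hf : constantCoeff f = 0)
    (hh : constantCoeff h = 0) :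
    coeff 2 (f * g * h) =
      coeff 1 f * constantCoeff g * coeff 1 h ∧ coeff 1 (f * g * h) = 0 := by
  obtain ⟨f', rfl⟩ := PowerSeries.X_dvd_iff.mpr hf
  obtain ⟨h', rfl⟩ := PowerSeries.X_dvd_iff.mpr hh
  have hre : (X * f') * g * (X * h') = X ^ 2 * (f' * (g * h')) := by ring
  constructor
  · rw [hre, show (2 : ℕ) = 0 + 2 from rfl, PowerSeries.coeff_X_pow_mul]
    simp only [PowerSeries.coeff_zero_eq_constantCoeff, _root_.map_mul,
      PowerSeries.coeff_succ_X_mul, PowerSeries.coeff_zero_eq_constantCoeff]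
    ring
  · rw [hre]
    have : (X : PowerSeries ℝ) ^ 2 ∣ X ^ 2 * (f' * (g * h')) := Dvd.intro _ rfl
    exact (PowerSeries.X_pow_dvd_iff.mp this) 1 (by omega)

lemma fixedPoint {n : ℕ} (Fps : Matrix (Fin n) (Fin n) (PowerSeries ℝ))
    (Hmat : Matrix (Fin n) (Fin n) (PowerSeries ℝ) → Matrix (Fin n) (Fin n) (PowerSeries ℝ))
    (hF0 : ∀ i j, constantCoeff (Fps i j) = 0)
    (hFsymm : Fps.IsSymm)
    (hHsymm : ∀ Δ : Matrix (Fin n) (Fin n) (PowerSeries ℝ), Δ.IsSymm → (Hmat Δ).IsSymm)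
    (hHcongr : ∀ (N : ℕ) (Δ Δ' : Matrix (Fin n) (Fin n) (PowerSeries ℝ)),
      (∀ i j, (X : PowerSeries ℝ) ^ N ∣ Δ i j - Δ' i j) →
      ∀ i j, (X : PowerSeries ℝ) ^ N ∣ Hmat Δ i j - Hmat Δ' i j) :
    ∃! Δ : Matrix (Fin n) (Fin n) (PowerSeries ℝ),
      Δ.IsSymm ∧ (∀ i j, constantCoeff (Δ i j) = 0) ∧ Δ = Fps - Δ * Hmat Δ * Δ := by
  classical
  set Φ : Matrix (Fin n) (Fin n) (PowerSeries ℝ) → Matrix (Fin n) (Fin n) (PowerSeries ℝ) :=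
    fun Δ => Fps - Δ * Hmat Δ * Δ with hΦdef
  have hΦ0 : ∀ Δ, (∀ i j, (X : PowerSeries ℝ) ∣ Δ i j) →
      ∀ i j, (X : PowerSeries ℝ) ∣ Φ Δ i j := by
    intro Δ hΔ i j
    have h1 : (X : PowerSeries ℝ) ∣ (Δ * Hmat Δ * Δ) i j := by
      rw [Matrix.mul_apply]
      exact Finset.dvd_sum fun b _ => Dvd.dvd.mul_left (hΔ b j) _
    have h2 : (X : PowerSeries ℝ) ∣ Fps i j := PowerSeries.X_dvd_iff.mpr (hF0 i j)
    simpa [hΦdef, Matrix.sub_apply] using dvd_sub h2 h1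
  have hΦsymm : ∀ Δ, Δ.IsSymm → (Φ Δ).IsSymm := by
    intro Δ hΔ
    show (Fps - Δ * Hmat Δ * Δ)ᵀ = Fps - Δ * Hmat Δ * Δ
    rw [Matrix.transpose_sub, Matrix.transpose_mul, Matrix.transpose_mul, hΔ, hHsymm Δ hΔ,
      hFsymm, ← Matrix.mul_assoc]
  have hcontract : ∀ (N : ℕ) Δ Δ', (∀ i j, (X : PowerSeries ℝ) ∣ Δ i j) →
      (∀ i j, (X : PowerSeries ℝ) ∣ Δ' i j) →
      (∀ i j, (X : PowerSeries ℝ) ^ N ∣ Δ i j - Δ' i j) →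
      ∀ i j, (X : PowerSeries ℝ) ^ (N + 1) ∣ Φ Δ i j - Φ Δ' i j := by
    intro N Δ Δ' h1 h2 h i j
    have hmat : Φ Δ - Φ Δ' =
        -((Δ - Δ') * Hmat Δ * Δ + Δ' * (Hmat Δ - Hmat Δ') * Δ + Δ' * Hmat Δ' * (Δ - Δ')) := by
      simp only [hΦdef]
      noncomm_ring
    have key : Φ Δ i j - Φ Δ' i j =
        -(((Δ - Δ') * Hmat Δ * Δ) i j + (Δ' * (Hmat Δ - Hmat Δ') * Δ) i j
          + (Δ' * Hmat Δ' * (Δ - Δ')) i j) := by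
      have := congrFun (congrFun hmat i) j
      simpa [Matrix.sub_apply, Matrix.neg_apply, Matrix.add_apply] using this
    rw [key]
    rw [dvd_neg]
    refine dvd_add (dvd_add ?_ ?_) ?_
    · rw [Matrix.mul_apply]
      refine Finset.dvd_sum fun b _ => ?_
      rw [pow_succ]
      refine mul_dvd_mul ?_ (h1 b j)
      rw [Matrix.mul_apply]
      refine Finset.dvd_sum fun a _ => ?_
      exact Dvd.dvd.mul_right (by simpa [Matrix.sub_apply] using h i a) _
    · rw [Matrix.mul_apply]
      refine Finset.dvd_sum fun b _ => ?_
      rw [pow_succ]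
      refine mul_dvd_mul ?_ (h1 b j)
      rw [Matrix.mul_apply]
      refine Finset.dvd_sum fun a _ => ?_
      refine Dvd.dvd.mul_left ?_ _
      simpa [Matrix.sub_apply] using hHcongr N Δ Δ' h a b
    · rw [Matrix.mul_apply]
      refine Finset.dvd_sum fun b _ => ?_
      rw [pow_succ']
      refine mul_dvd_mul ?_ (by simpa [Matrix.sub_apply] using h b j)
      rw [Matrix.mul_apply]
      exact Finset.dvd_sum fun a _ => Dvd.dvd.mul_right (h2 i a) _
  -- the iteration
  set seq : ℕ → Matrix (Fin n) (Fin n) (PowerSeries ℝ) :=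
    fun k => Nat.rec 0 (fun _ D => Φ D) k with hseq
  have hseqsucc : ∀ k, seq (k + 1) = Φ (seq k) := fun k => rfl
  have hseq0 : ∀ k i j, (X : PowerSeries ℝ) ∣ seq k i j := by
    intro k
    induction k with
    | zero => intro i j; simp [hseq]
    | succ k ih => rw [hseqsucc]; exact hΦ0 _ ih
  have hseqsymm : ∀ k, (seq k).IsSymm := by
    intro k
    induction k with
    | zero => simp [hseq, Matrix.IsSymm]
    | succ k ih => rw [hseqsucc]; exact hΦsymm _ ih
  have hadj : ∀ k i j, (X : PowerSeries ℝ) ^ k ∣ seq k i j - seq (k + 1) i j := by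
    intro k
    induction k with
    | zero => intro i j; simpa using one_dvd _
    | succ k ih =>
        intro i j
        have h := hcontract k _ _ (hseq0 k) (hseq0 (k + 1)) ih i j
        simpa [hseqsucc] using h
  have hchain : ∀ a b, a ≤ b → ∀ i j, (X : PowerSeries ℝ) ^ a ∣ seq a i j - seq b i j := by
    intro a b
    induction b with
    | zero =>
        intro hab i j
        have ha : a = 0 := by omega
        subst ha
        rw [pow_zero]
        exact one_dvd _
    | succ b ih =>
        intro hab i j
        rcases Nat.eq_or_lt_of_le hab with rfl | hlt
        · rw [sub_self]
          exact dvd_zero _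
        · have h1 := ih (by omega) i j
          have h2 : (X : PowerSeries ℝ) ^ a ∣ seq b i j - seq (b + 1) i j :=
            (pow_dvd_pow X (by omega : a ≤ b)).trans (hadj b i j)
          simpa [sub_add_sub_cancel] using dvd_add h1 h2
  set L : Matrix (Fin n) (Fin n) (PowerSeries ℝ) :=
    Matrix.of fun i j => PowerSeries.mk fun N => coeff N (seq (N + 1) i j) with hL
  have hLcoeff : ∀ N i j, coeff N (L i j) = coeff N (seq (N + 1) i j) := by
    intro N i j; simp [hL]
  have hLseq : ∀ m i j, (X : PowerSeries ℝ) ^ m ∣ L i j - seq m i j := by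
    intro m i j
    rw [PowerSeries.X_pow_dvd_iff]
    intro k hk
    rw [map_sub, hLcoeff]
    have h2 := (PowerSeries.X_pow_dvd_iff.mp (hchain (k + 1) m (by omega) i j)) k (by omega)
    rw [map_sub] at h2
    exact h2
  have hL0 : ∀ i j, (X : PowerSeries ℝ) ∣ L i j := by
    intro i j
    rw [PowerSeries.X_dvd_iff, ← PowerSeries.coeff_zero_eq_constantCoeff_apply, hLcoeff,
      PowerSeries.coeff_zero_eq_constantCoeff_apply, ← PowerSeries.X_dvd_iff]
    exact hseq0 1 i j
  have hLsymm : L.IsSymm := by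
    apply Matrix.ext
    intro i j
    rw [Matrix.transpose_apply]
    apply PowerSeries.ext
    intro N
    rw [hLcoeff, hLcoeff]
    congr 1
    conv_lhs => rw [← hseqsymm (N + 1)]
    exact Matrix.transpose_apply _ _ _
  have hLfix : L = Φ L := by
    apply Matrix.ext
    intro i j
    rw [← sub_eq_zero]
    apply psEqZero
    intro N
    have h1 : (X : PowerSeries ℝ) ^ (N + 1) ∣ Φ L i j - Φ (seq N) i j :=
      hcontract N L (seq N) hL0 (hseq0 N) (hLseq N) i j
    have h2 : (X : PowerSeries ℝ) ^ (N + 1) ∣ L i j - seq (N + 1) i j := hLseq (N + 1) i j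
    rw [← hseqsucc] at h1
    have h3 : (X : PowerSeries ℝ) ^ (N + 1) ∣ L i j - Φ L i j := by
      have := dvd_sub h2 h1
      simpa [sub_sub_sub_cancel_right] using this
    exact (pow_dvd_pow X (by omega : N ≤ N + 1)).trans h3
  have huniq : ∀ Δ Δ' : Matrix (Fin n) (Fin n) (PowerSeries ℝ),
      (∀ i j, constantCoeff (Δ i j) = 0) → (∀ i j, constantCoeff (Δ' i j) = 0) →
      Δ = Φ Δ → Δ' = Φ Δ' → Δ = Δ' := by
    intro Δ Δ' h0 h0' hfix hfix'
    have hdvd : ∀ N i j, (X : PowerSeries ℝ) ^ N ∣ Δ i j - Δ' i j := by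
      intro N
      induction N with
      | zero => intro i j; simpa using one_dvd _
      | succ N ih =>
          intro i j
          have := hcontract N Δ Δ'
            (fun i j => PowerSeries.X_dvd_iff.mpr (h0 i j))
            (fun i j => PowerSeries.X_dvd_iff.mpr (h0' i j)) ih i j
          rwa [← hfix, ← hfix'] at this
    apply Matrix.ext
    intro i j
    rw [← sub_eq_zero]
    exact psEqZero fun N => hdvd N i j
  refine ⟨L, ⟨hLsymm, ?_, hLfix⟩, ?_⟩
  · intro i j
    exact PowerSeries.X_dvd_iff.mp (hL0 i j)
  · rintro Δ ⟨hs, h0, hfix⟩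
    exact huniq Δ L h0 (fun i j => PowerSeries.X_dvd_iff.mp (hL0 i j)) hfix hLfix


/-- The recursion `Δ = F − Δ·H(Δ)·Δ`, where
`H(Δ)_{k₁k₂} = Σ_{m≥2} (1/m!) S_{k₁k₂k₃⋯kₘ} ∏_{l=3}^m (ΔS)_{kₗ}` with `S` a
polynomial (so that all derivatives beyond its degree `d` vanish), has a unique
solution as a formal power series (in the grading by powers of the entries of
`F`, marked by the power-series variable), with symmetric `Δ` of zero constant
term, and the expansion begins `Δᵢⱼ = Fᵢⱼ − ½ Fᵢₖ S_{kl} F_{lj} + ⋯`. -/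
theorem stmt5 (n d : ℕ) (S : (Fin n → ℝ) → ℝ) (x : Fin n → ℝ)
    (hpoly : ∃ P : MvPolynomial (Fin n) ℝ, ∀ y, S y = MvPolynomial.eval y P)
    (Dtens : (m : ℕ) → (ℕ → Fin n) → ℝ)
    (hD : ∀ (m : ℕ) (idx : ℕ → Fin n),
      Dtens m idx = iteratedFDeriv ℝ m S x (fun l : Fin m => Pi.single (idx (l : ℕ)) 1))
    (hvanish : ∀ m > d, ∀ idx, Dtens m idx = 0)
    (F : Matrix (Fin n) (Fin n) ℝ) (hF : F.IsSymm)
    (Sv : Fin n → PowerSeries ℝ)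
    (hSv : ∀ i, Sv i = PowerSeries.C (Dtens 1 (fun _ => i)))
    (Hmat : Matrix (Fin n) (Fin n) (PowerSeries ℝ) → Matrix (Fin n) (Fin n) (PowerSeries ℝ))
    (hH : ∀ Δ k₁ k₂, Hmat Δ k₁ k₂ =
      ∑ m ∈ Finset.Icc 2 d, (PowerSeries.C ((m.factorial : ℝ))⁻¹) *
        ∑ ks : Fin (m - 2) → Fin n,
          (PowerSeries.C (Dtens m (fun t =>
            if t = 0 then k₁ else if t = 1 then k₂
            else if h : t - 2 < m - 2 then ks ⟨t - 2, h⟩ else k₁))) *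
          ∏ l : Fin (m - 2), (Δ.mulVec Sv) (ks l))
    (Fps : Matrix (Fin n) (Fin n) (PowerSeries ℝ))
    (hFps : ∀ i j, Fps i j = PowerSeries.X * PowerSeries.C (F i j)) :
    (∃! Δ : Matrix (Fin n) (Fin n) (PowerSeries ℝ),
      Δ.IsSymm ∧ (∀ i j, PowerSeries.constantCoeff (Δ i j) = 0) ∧
      Δ = Fps - Δ * Hmat Δ * Δ) ∧
    (∀ Δ : Matrix (Fin n) (Fin n) (PowerSeries ℝ),
      Δ.IsSymm → (∀ i j, PowerSeries.constantCoeff (Δ i j) = 0) →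
      Δ = Fps - Δ * Hmat Δ * Δ →
      (∀ i j, PowerSeries.coeff 1 (Δ i j) = F i j) ∧
      (∀ i j, PowerSeries.coeff 2 (Δ i j) =
        -(1 / 2) * ∑ k, ∑ l, F i k *
          Dtens 2 (fun t => if t = 0 then k else l) * F l j)) := by
  classical
  obtain ⟨P, hP⟩ := hpoly
  have hS : ∀ N : ℕ, ContDiff ℝ N S := by
    intro N
    have hSeq : S = fun y => MvPolynomial.eval y P := funext hP
    rw [hSeq]
    exact auxContDiff P N
  have hDeq : ∀ (m : ℕ) (idx idx' : ℕ → Fin n), (∀ t, t < m → idx t = idx' t) →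
      Dtens m idx = Dtens m idx' := by
    intro m idx idx' h
    rw [hD, hD]
    congr 1
    funext l
    rw [h l l.isLt]
  have hDswap : ∀ (k : ℕ) (idx idx' : ℕ → Fin n),
      idx' 0 = idx 1 → idx' 1 = idx 0 → (∀ t, 2 ≤ t → t < k + 2 → idx' t = idx t) →
      Dtens (k + 2) idx = Dtens (k + 2) idx' := by
    intro k idx idx' h0 h1 h2
    rw [hD, hD]
    refine auxSwap hS k x _ _ ?_ ?_ ?_
    · simp [h0]
    · simp [h1]
    · intro i
      have hval : ((i.succ.succ : Fin (k + 2)) : ℕ) = (i : ℕ) + 1 + 1 := by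
        simp [Fin.val_succ]
      rw [hval, h2 _ (by omega) (by omega)]
  have hXFps : ∀ i j, PowerSeries.constantCoeff (Fps i j) = 0 := by
    intro i j; rw [hFps]; simp
  have hFpsSymm : Fps.IsSymm := by
    apply Matrix.ext; intro i j
    rw [Matrix.transpose_apply, hFps, hFps]
    have hFe : F j i = F i j := by
      conv_lhs => rw [← hF]
      exact Matrix.transpose_apply _ _ _
    rw [hFe]
  have hHsymm : ∀ Δ : Matrix (Fin n) (Fin n) (PowerSeries ℝ), Δ.IsSymm → (Hmat Δ).IsSymm := by
    intro Δ hΔ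
    apply Matrix.ext; intro i j
    rw [Matrix.transpose_apply, hH, hH]
    refine Finset.sum_congr rfl fun m hm => ?_
    congr 1
    refine Finset.sum_congr rfl fun ks _ => ?_
    congr 2
    have hm2 : 2 ≤ m := (Finset.mem_Icc.mp hm).1
    obtain ⟨k, rfl⟩ : ∃ k, m = k + 2 := ⟨m - 2, by omega⟩
    apply hDswap
    · simp
    · simp
    · intro t ht2 htk
      have ht0 : ¬ (t = 0) := by omega
      have ht1 : ¬ (t = 1) := by omega
      have hc : t - 2 < k + 2 - 2 := by omega
      simp only [ht0, ht1, if_false, dif_pos hc]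
  have hHcongr : ∀ (N : ℕ) (Δ Δ' : Matrix (Fin n) (Fin n) (PowerSeries ℝ)),
      (∀ i j, (PowerSeries.X : PowerSeries ℝ) ^ N ∣ Δ i j - Δ' i j) →
      ∀ i j, (PowerSeries.X : PowerSeries ℝ) ^ N ∣ Hmat Δ i j - Hmat Δ' i j := by
    intro N Δ Δ' h i j
    rw [hH, hH, ← Finset.sum_sub_distrib]
    refine Finset.dvd_sum fun m hm => ?_
    rw [← mul_sub]
    refine Dvd.dvd.mul_left ?_ _
    rw [← Finset.sum_sub_distrib]
    refine Finset.dvd_sum fun ks _ => ?_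
    rw [← mul_sub]
    refine Dvd.dvd.mul_left ?_ _
    refine auxProdDvd _ _ _ _ fun l _ => ?_
    have hmv : Δ.mulVec Sv (ks l) - Δ'.mulVec Sv (ks l)
        = ∑ t, (Δ (ks l) t - Δ' (ks l) t) * Sv t := by
      simp [Matrix.mulVec, dotProduct, Finset.sum_sub_distrib, sub_mul]
    rw [hmv]
    exact Finset.dvd_sum fun t _ => Dvd.dvd.mul_right (h _ t) _
  constructor
  · exact fixedPoint Fps Hmat hXFps hFpsSymm hHsymm hHcongr
  · intro Δ hsym hconst hfix
    have hentry : ∀ i j, Δ i j = Fps i j - (Δ * Hmat Δ * Δ) i j := by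
      intro i j
      conv_lhs => rw [hfix]
      rw [Matrix.sub_apply]
    have tripleSum : ∀ i j, (Δ * Hmat Δ * Δ) i j = ∑ b, ∑ a, Δ i a * Hmat Δ a b * Δ b j := by
      intro i j
      rw [Matrix.mul_apply]
      refine Finset.sum_congr rfl fun b _ => ?_
      rw [Matrix.mul_apply, Finset.sum_mul]
    have hc1 : ∀ i j, PowerSeries.coeff 1 (Δ i j) = F i j := by
      intro i j
      have hz : (PowerSeries.coeff 1) (∑ b, ∑ a, Δ i a * Hmat Δ a b * Δ b j) = 0 := by
        rw [map_sum]
        refine Finset.sum_eq_zero fun b _ => ?_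
        rw [map_sum]
        refine Finset.sum_eq_zero fun a _ => ?_
        exact (coeffTriple (hconst i a) (hconst b j)).2
      rw [hentry, map_sub, tripleSum, hz, hFps, sub_zero,
        show (1 : ℕ) = 0 + 1 from rfl, PowerSeries.coeff_succ_X_mul,
        PowerSeries.coeff_zero_eq_constantCoeff, PowerSeries.constantCoeff_C]
    have hc0H : ∀ a b, PowerSeries.constantCoeff (Hmat Δ a b)
        = (2 : ℝ)⁻¹ * Dtens 2 (fun t => if t = 0 then a else b) := by
      intro a b
      by_cases hd2 : 2 ≤ d
      · have hzero : ∀ m ∈ Finset.Icc 2 d, m ≠ 2 →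
            (PowerSeries.constantCoeff) ((PowerSeries.C ((m.factorial : ℝ))⁻¹) *
              ∑ ks : Fin (m - 2) → Fin n,
                (PowerSeries.C (Dtens m (fun t =>
                  if t = 0 then a else if t = 1 then b
                  else if h : t - 2 < m - 2 then ks ⟨t - 2, h⟩ else a))) *
                ∏ l : Fin (m - 2), (Δ.mulVec Sv) (ks l)) = 0 := by
          intro m hm hne
          have h3 : 3 ≤ m := by
            have := (Finset.mem_Icc.mp hm).1; omega
          rw [_root_.map_mul, map_sum]
          refine mul_eq_zero_of_right _ (Finset.sum_eq_zero fun ks _ => ?_)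
          rw [_root_.map_mul, map_prod]
          refine mul_eq_zero_of_right _
            (Finset.prod_eq_zero (Finset.mem_univ (⟨0, by omega⟩ : Fin (m - 2))) ?_)
          simp [Matrix.mulVec, dotProduct, map_sum, _root_.map_mul, hconst]
        rw [hH, map_sum,
          Finset.sum_eq_single_of_mem 2 (Finset.mem_Icc.mpr ⟨le_refl 2, hd2⟩)
            (fun m hm hne => hzero m hm hne)]
        rw [_root_.map_mul, PowerSeries.constantCoeff_C, map_sum]
        have hterm : ∀ ks : Fin (2 - 2) → Fin n,
            (PowerSeries.constantCoeff) ((PowerSeries.C (Dtens 2 (fun t =>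
              if t = 0 then a else if t = 1 then b
              else if h : t - 2 < 2 - 2 then ks ⟨t - 2, h⟩ else a))) *
              ∏ l : Fin (2 - 2), (Δ.mulVec Sv) (ks l))
            = Dtens 2 (fun t => if t = 0 then a else b) := by
          intro ks
          have hprod : (∏ l : Fin (2 - 2), (Δ.mulVec Sv) (ks l)) = 1 :=
            Finset.prod_eq_one fun z _ => absurd z.isLt (by omega)
          rw [hprod, mul_one, PowerSeries.constantCoeff_C]
          apply hDeq
          intro t ht
          interval_cases t <;> simp
        rw [Finset.sum_congr rfl fun ks _ => hterm ks, Finset.sum_const, Finset.card_univ]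
        have hcard : Fintype.card (Fin (2 - 2) → Fin n) = 1 := by simp
        rw [hcard, one_smul]
        norm_num [Nat.factorial]
      · have hIcc : Finset.Icc 2 d = ∅ := Finset.Icc_eq_empty (by omega)
        rw [hH, hIcc, Finset.sum_empty, map_zero, hvanish 2 (by omega), mul_zero]
    have hc2H : ∀ i j, PowerSeries.coeff 2 ((Δ * Hmat Δ * Δ) i j)
        = (1 / 2) * ∑ k, ∑ l, F i k * Dtens 2 (fun t => if t = 0 then k else l) * F l j := by
      intro i j
      rw [tripleSum]
      simp only [map_sum]
      rw [Finset.sum_comm, Finset.mul_sum]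
      refine Finset.sum_congr rfl fun a _ => ?_
      rw [Finset.mul_sum]
      refine Finset.sum_congr rfl fun b _ => ?_
      rw [(coeffTriple (hconst i a) (hconst b j)).1, hc1, hc1, hc0H]
      ring
    refine ⟨hc1, fun i j => ?_⟩
    rw [hentry, map_sub, hc2H, hFps,
      show (2 : ℕ) = 1 + 1 from rfl, PowerSeries.coeff_succ_X_mul, PowerSeries.coeff_C,
      if_neg one_ne_zero, zero_sub]
    ring
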